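/- The linear ODE [1 + b - G(t)] h(t) + c t h'(t) = 1 with initial condition h(0) = 1/(1+b), where G : [0,1] → ℝ is continuous with G(0) = 0 and b, c > 0, has the solution h(t) = (1/c) t^{-(1+b)/c} ∫_0^t u^{(1+b)/c - 1} exp{ (1/c) ∫_u^t G(s)/s ds } du on (0,1], extended continuously to 0. -/

import Mathlib

open MeasureTheory intervalIntegral Filter

noncomputable def odePsi (G : ℝ → ℝ) (t : ℝ) : ℝ := ∫ s in (1:ℝ)..t, G s / s

noncomputable def odePhi (b c : ℝ) (G : ℝ → ℝ) (u : ℝ) : ℝ :=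
  u ^ ((1 + b) / c - 1) * Real.exp (-odePsi G u / c)

section odeAux
open Set

variable {G : ℝ → ℝ}

lemma ode_gcont (hG : ContinuousOn G (Set.Icc 0 1)) :
    ContinuousOn (fun s => G s / s) (Set.Ioc 0 1) :=
  (hG.mono Ioc_subset_Icc_self).div continuousOn_id (fun x hx => ne_of_gt hx.1)

lemma ode_gint (hG : ContinuousOn G (Set.Icc 0 1)) {u v : ℝ}
    (hu : u ∈ Set.Ioc (0:ℝ) 1) (hv : v ∈ Set.Ioc (0:ℝ) 1) :
    IntervalIntegrable (fun s => G s / s) volume u v := by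
  apply ContinuousOn.intervalIntegrable
  apply (ode_gcont hG).mono
  intro x hx
  rw [Set.uIcc, Set.mem_Icc] at hx
  exact ⟨lt_of_lt_of_le (lt_min hu.1 hv.1) hx.1, le_trans hx.2 (max_le hu.2 hv.2)⟩

lemma ode_psi_diff (hG : ContinuousOn G (Set.Icc 0 1)) {u t : ℝ}
    (hu : u ∈ Set.Ioc (0:ℝ) 1) (ht : t ∈ Set.Ioc (0:ℝ) 1) :
    (∫ s in u..t, G s / s) = odePsi G t - odePsi G u := by
  have h1 : IntervalIntegrable (fun s => G s / s) volume u 1 :=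
    ode_gint hG hu (by simp)
  have h2 : IntervalIntegrable (fun s => G s / s) volume 1 t :=
    ode_gint hG (by simp) ht
  have h3 := integral_add_adjacent_intervals h1 h2
  unfold odePsi
  rw [← h3, integral_symm]
  ring

lemma ode_small_bound (hG : ContinuousOn G (Set.Icc 0 1)) (hG0 : G 0 = 0)
    {ε : ℝ} (hε : 0 < ε) :
    ∃ δ ∈ Set.Ioc (0:ℝ) 1, ∀ u v : ℝ, 0 < u → u ≤ v → v ≤ δ →
      |∫ s in u..v, G s / s| ≤ ε * (Real.log v - Real.log u) := by
  have h0 : ContinuousWithinAt G (Set.Icc 0 1) 0 := hG 0 ⟨le_refl _, zero_le_one⟩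
  rw [ContinuousWithinAt, Metric.tendsto_nhdsWithin_nhds] at h0
  obtain ⟨δ₀, hδ₀, hδ⟩ := h0 ε hε
  refine ⟨min (δ₀/2) 1, ⟨lt_min (by linarith) one_pos, min_le_right _ _⟩, ?_⟩
  intro u v hu huv hv
  have hv1 : v ≤ 1 := hv.trans (min_le_right _ _)
  have hvδ : v ≤ δ₀ / 2 := hv.trans (min_le_left _ _)
  have hbound : ∀ s ∈ Set.uIoc u v, ‖G s / s‖ ≤ ε / s := by
    intro s hs
    rw [Set.uIoc_of_le huv, Set.mem_Ioc] at hs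
    have hs0 : 0 < s := lt_of_le_of_lt (le_of_lt hu) hs.1
    have hGs : |G s| ≤ ε := by
      have := hδ (x := s) ⟨hs0.le, hs.2.trans hv1⟩
        (by rw [Real.dist_eq, sub_zero, abs_of_pos hs0]; linarith)
      rw [Real.dist_eq, hG0, sub_zero] at this
      exact this.le
    rw [Real.norm_eq_abs, abs_div, abs_of_pos hs0, div_le_div_iff_of_pos_right hs0]
    exact hGs
  have hint : IntervalIntegrable (fun s => ε / s) volume u v := by
    apply ContinuousOn.intervalIntegrable
    apply ContinuousOn.div continuousOn_const continuousOn_id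
    intro x hx
    rw [Set.uIcc_of_le huv, Set.mem_Icc] at hx
    exact ne_of_gt (lt_of_lt_of_le hu hx.1)
  have key := intervalIntegral.norm_integral_le_abs_of_norm_le (μ := volume)
    (f := fun s => G s / s) (a := u) (b := v)
    ((ae_restrict_iff' measurableSet_uIoc).mpr (Filter.Eventually.of_forall hbound)) hint
  calc |∫ s in u..v, G s / s| ≤ |∫ s in u..v, ε / s| := key
    _ = ε * (Real.log v - Real.log u) := by
      have h0m : (0:ℝ) ∉ Set.uIcc u v := by
        rw [Set.uIcc_of_le huv, Set.mem_Icc]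
        push_neg
        intro hcon; linarith
      have hrw : ∀ s : ℝ, ε / s = ε * (1 / s) := fun s => by ring
      simp_rw [hrw]
      rw [intervalIntegral.integral_const_mul, integral_one_div h0m,
        Real.log_div (by linarith : v ≠ 0) (ne_of_gt hu), abs_mul, abs_of_pos hε,
        abs_of_nonneg]
      rw [sub_nonneg]
      exact Real.log_le_log hu huv

lemma ode_phi_cont {b c : ℝ} (hψ : ContinuousOn (odePsi G) (Set.Ioc 0 1)) :
    ContinuousOn (odePhi b c G) (Set.Ioc 0 1) := by
  apply ContinuousOn.mul
  · intro x hx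
    exact (Real.continuousAt_rpow_const x _ (Or.inl (ne_of_gt hx.1))).continuousWithinAt
  · exact (((hψ.neg).div_const c)).rexp

lemma ode_phi_bound {b c : ℝ} (hc : 0 < c) {ε δ : ℝ} (hδ : δ ∈ Set.Ioc (0:ℝ) 1)
    (hsm : ∀ u v : ℝ, 0 < u → u ≤ v → v ≤ δ →
      |∫ s in u..v, G s / s| ≤ ε * (Real.log v - Real.log u))
    (hψd : ∀ u ∈ Set.Ioc (0:ℝ) 1, (∫ s in u..δ, G s / s) = odePsi G δ - odePsi G u)
    {u : ℝ} (hu : u ∈ Set.Ioc 0 δ) :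
    odePhi b c G u ≤ Real.exp ((-odePsi G δ + ε * Real.log δ) / c) *
      u ^ ((1 + b) / c - 1 - ε / c) := by
  have hu0 : 0 < u := hu.1
  have huδ : u ≤ δ := hu.2
  have h1 : odePsi G δ - odePsi G u = ∫ s in u..δ, G s / s :=
    (hψd u ⟨hu0, huδ.trans hδ.2⟩).symm
  have h2 : -odePsi G u ≤ -odePsi G δ + ε * (Real.log δ - Real.log u) := by
    have := (abs_le.mp (hsm u δ hu0 huδ le_rfl)).2
    rw [← h1] at this
    linarith
  calc odePhi b c G u = u ^ ((1 + b) / c - 1) * Real.exp (-odePsi G u / c) := rfl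
    _ ≤ u ^ ((1 + b) / c - 1) *
        Real.exp ((-odePsi G δ + ε * (Real.log δ - Real.log u)) / c) := by
        apply mul_le_mul_of_nonneg_left _ (Real.rpow_nonneg hu0.le _)
        apply Real.exp_le_exp.mpr
        exact div_le_div_of_nonneg_right h2 hc.le
    _ = Real.exp ((-odePsi G δ + ε * Real.log δ) / c) * u ^ ((1 + b) / c - 1 - ε / c) := by
        rw [show (-odePsi G δ + ε * (Real.log δ - Real.log u)) / c
            = (-odePsi G δ + ε * Real.log δ) / c + (-(ε/c)) * Real.log u by ring]
        rw [Real.exp_add]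
        rw [show (-(ε/c)) * Real.log u = Real.log u * (-(ε/c)) by ring]
        rw [← Real.rpow_def_of_pos hu0]
        rw [show u ^ ((1+b)/c - 1) * (Real.exp ((-odePsi G δ + ε * Real.log δ) / c) * u ^ (-(ε/c)))
            = Real.exp ((-odePsi G δ + ε * Real.log δ) / c) * (u ^ ((1+b)/c - 1) * u ^ (-(ε/c)))
            by ring]
        rw [← Real.rpow_add hu0]
        ring_nf

lemma ode_phi_int {b c : ℝ}
    (hφc : ContinuousOn (odePhi b c G) (Set.Ioc 0 1))
    {δ C β : ℝ} (hδ : δ ∈ Set.Ioc (0:ℝ) 1) (hβ : -1 < β)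
    (hbd : ∀ u ∈ Set.Ioc (0:ℝ) δ, odePhi b c G u ≤ C * u ^ β) :
    IntervalIntegrable (odePhi b c G) volume 0 1 := by
  rw [intervalIntegrable_iff_integrableOn_Ioc_of_le zero_le_one]
  have hsplit : Set.Ioc (0:ℝ) 1 = Set.Ioc 0 δ ∪ Set.Ioc δ 1 :=
    (Set.Ioc_union_Ioc_eq_Ioc hδ.1.le hδ.2).symm
  rw [hsplit]
  apply MeasureTheory.IntegrableOn.union
  · have hmono : Set.Ioc (0:ℝ) δ ⊆ Set.Ioc 0 1 := Set.Ioc_subset_Ioc le_rfl hδ.2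
    have hmeas : AEStronglyMeasurable (odePhi b c G) (volume.restrict (Set.Ioc 0 δ)) :=
      (hφc.mono hmono).aestronglyMeasurable measurableSet_Ioc
    have hint : IntegrableOn (fun u : ℝ => C * u ^ β) (Set.Ioc 0 δ) := by
      have := (intervalIntegrable_rpow' (a := 0) (b := δ) hβ).const_mul C
      rwa [intervalIntegrable_iff_integrableOn_Ioc_of_le hδ.1.le] at this
    apply MeasureTheory.Integrable.mono hint hmeas
    rw [ae_restrict_iff' measurableSet_Ioc]
    apply Filter.Eventually.of_forall
    intro u hu
    have h1 : 0 ≤ odePhi b c G u :=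
      mul_nonneg (Real.rpow_nonneg hu.1.le _) (Real.exp_pos _).le
    rw [Real.norm_eq_abs, Real.norm_eq_abs, abs_of_nonneg h1]
    exact (hbd u hu).trans (le_abs_self _)
  · have hIcc : Set.Icc δ 1 ⊆ Set.Ioc 0 1 := fun x hx => ⟨lt_of_lt_of_le hδ.1 hx.1, hx.2⟩
    exact ((hφc.mono hIcc).integrableOn_Icc).mono_set Set.Ioc_subset_Icc_self

lemma ode_ftc {f : ℝ → ℝ} {a : ℝ} (hfc : ContinuousOn f (Set.Ioc 0 1))
    (hfi : ∀ t ∈ Set.Ioc (0:ℝ) 1, IntervalIntegrable f volume a t)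
    {t : ℝ} (ht : t ∈ Set.Ioc (0:ℝ) 1) :
    HasDerivWithinAt (fun x => ∫ u in a..x, f u) (f t) (Set.Ioc 0 1) t := by
  rcases eq_or_lt_of_le ht.2 with h1 | h1
  · subst h1
    have hmem : Set.Ioc (0:ℝ) 1 ∈ nhdsWithin (1:ℝ) (Set.Iic 1) := by
      rw [show Set.Ioc (0:ℝ) 1 = Set.Iic 1 ∩ Set.Ioi 0 by ext x; simp [Set.mem_Ioc]; tauto]
      exact inter_mem_nhdsWithin _ (Ioi_mem_nhds ht.1)
    have hmeas : StronglyMeasurableAtFilter f (nhdsWithin (1:ℝ) (Set.Iic 1)) :=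
      ⟨Set.Ioc 0 1, hmem, hfc.aestronglyMeasurable measurableSet_Ioc⟩
    have hcont : ContinuousWithinAt f (Set.Iic 1) 1 :=
      (hfc 1 ht).mono_of_mem_nhdsWithin hmem
    exact (integral_hasDerivWithinAt_right (hfi 1 ht) hmeas hcont).mono Set.Ioc_subset_Iic_self
  · have hmem : Set.Ioo (0:ℝ) 1 ∈ nhds t := Ioo_mem_nhds ht.1 h1
    have hmeas : StronglyMeasurableAtFilter f (nhds t) :=
      ⟨Set.Ioo 0 1, hmem,
        (hfc.mono Set.Ioo_subset_Ioc_self).aestronglyMeasurable measurableSet_Ioo⟩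
    have hcont : ContinuousAt f t :=
      (hfc.mono Set.Ioo_subset_Ioc_self).continuousAt hmem
    exact (integral_hasDerivAt_right (hfi t ht) hmeas hcont).hasDerivWithinAt

end odeAux

theorem ode_solution (b c : ℝ) (hb : 0 < b) (hc : 0 < c)
    (G : ℝ → ℝ) (hG : ContinuousOn G (Set.Icc 0 1)) (hG0 : G 0 = 0)
    (h : ℝ → ℝ)
    (hh : ∀ t ∈ Set.Ioc (0:ℝ) 1, h t =
      (1 / c) * t ^ (-(1 + b) / c) *
        ∫ u in (0:ℝ)..t, u ^ ((1 + b) / c - 1) *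
          Real.exp ((1 / c) * ∫ s in u..t, G s / s)) :
    (∀ t ∈ Set.Ioc (0:ℝ) 1, (1 + b - G t) * h t + c * t * derivWithin h (Set.Ioc 0 1) t = 1) ∧
    Tendsto h (nhdsWithin 0 (Set.Ioi 0)) (nhds (1 / (1 + b))) := by
  have hb1 : (0:ℝ) < 1 + b := by linarith
  have hgc := ode_gcont hG
  have hψd : ∀ t ∈ Set.Ioc (0:ℝ) 1, HasDerivWithinAt (odePsi G) (G t / t) (Set.Ioc 0 1) t :=
    fun t ht => ode_ftc hgc (fun s hs => ode_gint hG (by simp) hs) ht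
  have hψc : ContinuousOn (odePsi G) (Set.Ioc 0 1) :=
    fun t ht => (hψd t ht).continuousWithinAt
  have hφc : ContinuousOn (odePhi b c G) (Set.Ioc 0 1) := ode_phi_cont hψc
  obtain ⟨δ₁, hδ₁, hsm₁⟩ := ode_small_bound hG hG0 (show (0:ℝ) < (1+b)/2 by linarith)
  have hφint : IntervalIntegrable (odePhi b c G) volume 0 1 := by
    apply ode_phi_int hφc hδ₁ (β := (1 + b) / c - 1 - ((1+b)/2) / c)
    · have h1 : (0:ℝ) < (1+b)/c := by positivity
      have h2 : ((1+b)/2)/c = ((1+b)/c)/2 := by ring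
      rw [h2]; linarith
    · intro u hu
      exact ode_phi_bound hc hδ₁ hsm₁
        (fun v hv => ode_psi_diff hG hv hδ₁) hu
  set J : ℝ → ℝ := fun t => ∫ u in (0:ℝ)..t, odePhi b c G u with hJdef
  have hJint : ∀ t ∈ Set.Ioc (0:ℝ) 1, IntervalIntegrable (odePhi b c G) volume 0 t := by
    intro t ht
    apply hφint.mono_set
    rw [Set.uIcc_of_le ht.1.le, Set.uIcc_of_le zero_le_one]
    exact Set.Icc_subset_Icc le_rfl ht.2
  have hJd : ∀ t ∈ Set.Ioc (0:ℝ) 1, HasDerivWithinAt J (odePhi b c G t) (Set.Ioc 0 1) t :=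
    fun t ht => ode_ftc hφc hJint ht
  -- rewrite h
  have h_eq : ∀ t ∈ Set.Ioc (0:ℝ) 1,
      h t = 1 / c * (t ^ (-(1 + b) / c) * (Real.exp (odePsi G t / c) * J t)) := by
    intro t ht
    rw [hh t ht]
    have hcongr : (∫ u in (0:ℝ)..t, u ^ ((1 + b) / c - 1) *
          Real.exp ((1 / c) * ∫ s in u..t, G s / s))
        = ∫ u in (0:ℝ)..t, Real.exp (odePsi G t / c) * odePhi b c G u := by
      apply intervalIntegral.integral_congr_ae
      apply Filter.Eventually.of_forall
      intro u hu
      rw [Set.uIoc_of_le ht.1.le, Set.mem_Ioc] at hu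
      have hu1 : u ∈ Set.Ioc (0:ℝ) 1 := ⟨hu.1, hu.2.trans ht.2⟩
      rw [ode_psi_diff hG hu1 ht]
      rw [show (1/c) * (odePsi G t - odePsi G u) = odePsi G t / c + (-odePsi G u / c) by ring,
        Real.exp_add]
      unfold odePhi
      ring
    rw [hcongr, intervalIntegral.integral_const_mul]
    ring
  constructor
  · -- the ODE
    intro t ht
    have ht0 : 0 < t := ht.1
    have hA : HasDerivWithinAt (fun x : ℝ => x ^ (-(1 + b) / c))
        ((-(1 + b) / c) * t ^ (-(1 + b) / c - 1)) (Set.Ioc 0 1) t :=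
      (Real.hasDerivAt_rpow_const (Or.inl ht0.ne')).hasDerivWithinAt
    have hB : HasDerivWithinAt (fun x => Real.exp (odePsi G x / c))
        (Real.exp (odePsi G t / c) * (G t / t / c)) (Set.Ioc 0 1) t :=
      ((hψd t ht).div_const c).exp
    have hH : HasDerivWithinAt
        (fun x => 1 / c * (x ^ (-(1 + b) / c) * (Real.exp (odePsi G x / c) * J x)))
        (1 / c * ((-(1 + b) / c) * t ^ (-(1 + b) / c - 1) * (Real.exp (odePsi G t / c) * J t)
          + t ^ (-(1 + b) / c) * (Real.exp (odePsi G t / c) * (G t / t / c) * J t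
            + Real.exp (odePsi G t / c) * odePhi b c G t))) (Set.Ioc 0 1) t :=
      (hA.mul (hB.mul (hJd t ht))).const_mul (1 / c)
    have hderiv : derivWithin h (Set.Ioc 0 1) t
        = 1 / c * ((-(1 + b) / c) * t ^ (-(1 + b) / c - 1) * (Real.exp (odePsi G t / c) * J t)
          + t ^ (-(1 + b) / c) * (Real.exp (odePsi G t / c) * (G t / t / c) * J t
            + Real.exp (odePsi G t / c) * odePhi b c G t)) := by
      rw [derivWithin_congr (fun x hx => h_eq x hx) (h_eq t ht)]
      exact hH.derivWithin ((uniqueDiffOn_Ioc 0 1) t ht)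
    rw [hderiv, h_eq t ht]
    -- algebra
    set A := t ^ (-(1 + b) / c) with hAdef
    set B := Real.exp (odePsi G t / c) with hBdef
    have hA0 : 0 < A := Real.rpow_pos_of_pos ht0 _
    have hB0 : 0 < B := Real.exp_pos _
    have e1 : t ^ (-(1 + b) / c - 1) = A / t := by
      rw [hAdef, Real.rpow_sub ht0, Real.rpow_one]
    have e2 : B * odePhi b c G t = t ^ ((1 + b) / c - 1) := by
      unfold odePhi
      rw [hBdef, show Real.exp (odePsi G t / c) * (t ^ ((1+b)/c - 1) * Real.exp (-odePsi G t / c))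
        = t ^ ((1+b)/c - 1) * (Real.exp (odePsi G t / c) * Real.exp (-odePsi G t / c)) by ring,
        ← Real.exp_add, show odePsi G t / c + -odePsi G t / c = 0 by ring, Real.exp_zero,
        mul_one]
    have e3 : A * t ^ ((1 + b) / c - 1) = 1 / t := by
      rw [hAdef, ← Real.rpow_add ht0]
      rw [show -(1+b)/c + ((1+b)/c - 1) = -1 by ring]
      rw [Real.rpow_neg_one]
      exact (one_div t).symm
    rw [e1]
    have e4 : t ^ ((1 + b) / c - 1) = 1 / (t * A) := by
      rw [eq_div_iff (by positivity : t * A ≠ 0)]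
      rw [show t ^ ((1+b)/c - 1) * (t * A) = A * t ^ ((1+b)/c-1) * t by ring, e3]
      field_simp
    rw [e2, e4]
    field_simp
    ring
  · -- the limit
    have hbounds : ∀ ε : ℝ, 0 < ε → ε < 1 + b → ∃ δ ∈ Set.Ioc (0:ℝ) 1,
        ∀ t ∈ Set.Ioc (0:ℝ) δ, 1/(1+b+ε) ≤ h t ∧ h t ≤ 1/(1+b-ε) := by
      intro ε hε hεb
      obtain ⟨δ, hδ, hsm⟩ := ode_small_bound hG hG0 hε
      refine ⟨δ, hδ, ?_⟩
      intro t htδ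
      have ht : t ∈ Set.Ioc (0:ℝ) 1 := ⟨htδ.1, htδ.2.trans hδ.2⟩
      have ht0 : 0 < t := ht.1
      have hεc : ε / c < (1 + b) / c := by gcongr
      set F : ℝ → ℝ := fun u => u ^ ((1 + b) / c - 1) *
          Real.exp ((1 / c) * ∫ s in u..t, G s / s) with hFdef
      have hFeq : ∀ u ∈ Set.Ioc (0:ℝ) t,
          F u = Real.exp (odePsi G t / c) * odePhi b c G u := by
        intro u hu
        have hu1 : u ∈ Set.Ioc (0:ℝ) 1 := ⟨hu.1, hu.2.trans ht.2⟩
        rw [hFdef]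
        simp only
        rw [ode_psi_diff hG hu1 ht,
          show (1/c) * (odePsi G t - odePsi G u) = odePsi G t / c + (-odePsi G u / c) by ring,
          Real.exp_add]
        unfold odePhi
        ring
      have hFint : IntegrableOn F (Set.Ioc 0 t) := by
        have h1 : IntegrableOn (fun u => Real.exp (odePsi G t / c) * odePhi b c G u)
            (Set.Ioc 0 t) := by
          have := (hJint t ht).const_mul (Real.exp (odePsi G t / c))
          rwa [intervalIntegrable_iff_integrableOn_Ioc_of_le ht0.le] at this
        exact h1.congr_fun (fun u hu => (hFeq u hu).symm) measurableSet_Ioc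
      -- pointwise bounds
      have hFbd : ∀ u ∈ Set.Ioc (0:ℝ) t,
          t ^ (-(ε/c)) * u ^ ((1+b)/c - 1 + ε/c) ≤ F u ∧
          F u ≤ t ^ (ε/c) * u ^ ((1+b)/c - 1 - ε/c) := by
        intro u hu
        have hu0 : 0 < u := hu.1
        have hlog := hsm u t hu0 hu.2 htδ.2
        have hup : (1/c) * (∫ s in u..t, G s / s) ≤ (ε/c) * (Real.log t - Real.log u) := by
          have h2 := (abs_le.mp hlog).2
          calc (1/c) * (∫ s in u..t, G s / s)
              ≤ (1/c) * (ε * (Real.log t - Real.log u)) := by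
                apply mul_le_mul_of_nonneg_left h2 (by positivity)
            _ = (ε/c) * (Real.log t - Real.log u) := by ring
        have hlo : -((ε/c) * (Real.log t - Real.log u)) ≤ (1/c) * (∫ s in u..t, G s / s) := by
          have h2 := (abs_le.mp hlog).1
          calc -((ε/c) * (Real.log t - Real.log u))
              = (1/c) * (-(ε * (Real.log t - Real.log u))) := by ring
            _ ≤ (1/c) * (∫ s in u..t, G s / s) := by
                apply mul_le_mul_of_nonneg_left h2 (by positivity)
        have hexp_up : Real.exp ((ε/c) * (Real.log t - Real.log u))
            = t ^ (ε/c) * u ^ (-(ε/c)) := by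
          rw [show (ε/c) * (Real.log t - Real.log u)
              = Real.log t * (ε/c) + Real.log u * (-(ε/c)) by ring, Real.exp_add,
            ← Real.rpow_def_of_pos ht0, ← Real.rpow_def_of_pos hu0]
        have hexp_lo : Real.exp (-((ε/c) * (Real.log t - Real.log u)))
            = t ^ (-(ε/c)) * u ^ (ε/c) := by
          rw [show -((ε/c) * (Real.log t - Real.log u))
              = Real.log t * (-(ε/c)) + Real.log u * (ε/c) by ring, Real.exp_add,
            ← Real.rpow_def_of_pos ht0, ← Real.rpow_def_of_pos hu0]
        constructor
        · calc t ^ (-(ε/c)) * u ^ ((1+b)/c - 1 + ε/c)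
              = u ^ ((1+b)/c - 1) * (t ^ (-(ε/c)) * u ^ (ε/c)) := by
                rw [show (1+b)/c - 1 + ε/c = ((1+b)/c - 1) + ε/c by ring,
                  Real.rpow_add hu0]
                ring
            _ ≤ F u := by
                rw [hFdef]
                simp only
                apply mul_le_mul_of_nonneg_left _ (Real.rpow_nonneg hu0.le _)
                rw [← hexp_lo]
                exact Real.exp_le_exp.mpr hlo
        · calc F u ≤ u ^ ((1+b)/c - 1) * (t ^ (ε/c) * u ^ (-(ε/c))) := by
                rw [hFdef]
                simp only
                apply mul_le_mul_of_nonneg_left _ (Real.rpow_nonneg hu0.le _)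
                rw [← hexp_up]
                exact Real.exp_le_exp.mpr hup
            _ = t ^ (ε/c) * u ^ ((1+b)/c - 1 - ε/c) := by
                rw [show (1+b)/c - 1 - ε/c = ((1+b)/c - 1) + (-(ε/c)) by ring,
                  Real.rpow_add hu0]
                ring
      -- integrals of the power bounds
      have hpow_int : ∀ β : ℝ, -1 < β → ∀ k : ℝ,
          ∫ u in Set.Ioc (0:ℝ) t, k * u ^ β = k * (t ^ (β + 1) / (β + 1)) := by
        intro β hβ k
        rw [← intervalIntegral.integral_of_le ht0.le, intervalIntegral.integral_const_mul,
          integral_rpow (Or.inl hβ), Real.zero_rpow (by linarith : β + 1 ≠ 0), sub_zero]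
      have hβ1 : (-1:ℝ) < (1+b)/c - 1 + ε/c := by
        have : (0:ℝ) < (1+b)/c := by positivity
        have : (0:ℝ) ≤ ε/c := by positivity
        linarith
      have hβ2 : (-1:ℝ) < (1+b)/c - 1 - ε/c := by linarith
      have hIlow : t ^ (-(ε/c)) * (t ^ ((1+b)/c - 1 + ε/c + 1) / ((1+b)/c - 1 + ε/c + 1))
          ≤ ∫ u in Set.Ioc (0:ℝ) t, F u := by
        rw [← hpow_int _ hβ1]
        apply MeasureTheory.setIntegral_mono_on _ hFint measurableSet_Ioc
          (fun u hu => (hFbd u hu).1)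
        have := (intervalIntegrable_rpow' (a := 0) (b := t) hβ1).const_mul (t ^ (-(ε/c)))
        rwa [intervalIntegrable_iff_integrableOn_Ioc_of_le ht0.le] at this
      have hIup : (∫ u in Set.Ioc (0:ℝ) t, F u)
          ≤ t ^ (ε/c) * (t ^ ((1+b)/c - 1 - ε/c + 1) / ((1+b)/c - 1 - ε/c + 1)) := by
        rw [← hpow_int _ hβ2]
        apply MeasureTheory.setIntegral_mono_on hFint _ measurableSet_Ioc
          (fun u hu => (hFbd u hu).2)
        have := (intervalIntegrable_rpow' (a := 0) (b := t) hβ2).const_mul (t ^ (ε/c))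
        rwa [intervalIntegrable_iff_integrableOn_Ioc_of_le ht0.le] at this
      -- compute the power products
      have hq1 : t ^ (-(ε/c)) * t ^ ((1+b)/c - 1 + ε/c + 1) = t ^ ((1+b)/c) := by
        rw [← Real.rpow_add ht0]; ring_nf
      have hq2 : t ^ (ε/c) * t ^ ((1+b)/c - 1 - ε/c + 1) = t ^ ((1+b)/c) := by
        rw [← Real.rpow_add ht0]; ring_nf
      have hq3 : t ^ (-(1+b)/c) * t ^ ((1+b)/c) = 1 := by
        rw [← Real.rpow_add ht0, show -(1+b)/c + (1+b)/c = 0 by ring, Real.rpow_zero]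
      have hA0 : (0:ℝ) < t ^ (-(1+b)/c) := Real.rpow_pos_of_pos ht0 _
      have hht : h t = 1 / c * t ^ (-(1+b)/c) * ∫ u in Set.Ioc (0:ℝ) t, F u := by
        rw [hh t ht, intervalIntegral.integral_of_le ht0.le]
      have hX1 : c * ((1+b)/c - 1 + ε/c + 1) = 1 + b + ε := by field_simp; ring
      have hX2 : c * ((1+b)/c - 1 - ε/c + 1) = 1 + b - ε := by field_simp; ring
      constructor
      · rw [hht]
        have step : 1 / c * t ^ (-(1+b)/c) *
            (t ^ (-(ε/c)) * (t ^ ((1+b)/c - 1 + ε/c + 1) / ((1+b)/c - 1 + ε/c + 1)))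
            ≤ 1 / c * t ^ (-(1+b)/c) * ∫ u in Set.Ioc (0:ℝ) t, F u := by
          apply mul_le_mul_of_nonneg_left hIlow (by positivity)
        refine le_trans (le_of_eq ?_) step
        rw [show t ^ (-(ε/c)) * (t ^ ((1+b)/c - 1 + ε/c + 1) / ((1+b)/c - 1 + ε/c + 1))
            = (t ^ (-(ε/c)) * t ^ ((1+b)/c - 1 + ε/c + 1)) / ((1+b)/c - 1 + ε/c + 1) by ring,
          hq1]
        rw [show 1 / c * t ^ (-(1+b)/c) * (t ^ ((1+b)/c) / ((1+b)/c - 1 + ε/c + 1))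
            = (t ^ (-(1+b)/c) * t ^ ((1+b)/c)) * (1 / c * (1 / ((1+b)/c - 1 + ε/c + 1))) by ring,
          hq3, one_mul, div_mul_div_comm, one_mul, hX1]
      · rw [hht]
        have step : 1 / c * t ^ (-(1+b)/c) * (∫ u in Set.Ioc (0:ℝ) t, F u)
            ≤ 1 / c * t ^ (-(1+b)/c) *
            (t ^ (ε/c) * (t ^ ((1+b)/c - 1 - ε/c + 1) / ((1+b)/c - 1 - ε/c + 1))) := by
          apply mul_le_mul_of_nonneg_left hIup (by positivity)
        refine le_trans step (le_of_eq ?_)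
        rw [show t ^ (ε/c) * (t ^ ((1+b)/c - 1 - ε/c + 1) / ((1+b)/c - 1 - ε/c + 1))
            = (t ^ (ε/c) * t ^ ((1+b)/c - 1 - ε/c + 1)) / ((1+b)/c - 1 - ε/c + 1) by ring,
          hq2]
        rw [show 1 / c * t ^ (-(1+b)/c) * (t ^ ((1+b)/c) / ((1+b)/c - 1 - ε/c + 1))
            = (t ^ (-(1+b)/c) * t ^ ((1+b)/c)) * (1 / c * (1 / ((1+b)/c - 1 - ε/c + 1))) by ring,
          hq3, one_mul, div_mul_div_comm, one_mul, hX2]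
    have hL : (0:ℝ) < 1 + b := hb1
    rw [Metric.tendsto_nhdsWithin_nhds]
    intro ε' hε'
    set ε := min ((1+b)/2) (ε' * (1+b)^2 / 4) with hεdef
    have hε0 : 0 < ε := lt_min (by linarith) (by positivity)
    have hε1 : ε < 1 + b := lt_of_le_of_lt (min_le_left _ _) (by linarith)
    have hε2 : ε ≤ (1+b)/2 := min_le_left _ _
    have hε3 : ε ≤ ε' * (1+b)^2 / 4 := min_le_right _ _
    obtain ⟨δ, hδ, hbd⟩ := hbounds ε hε0 hε1
    refine ⟨δ, hδ.1, ?_⟩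
    intro t ht hdist
    rw [Real.dist_eq, sub_zero] at hdist
    have ht0 : 0 < t := ht
    have htδ : t ∈ Set.Ioc (0:ℝ) δ := ⟨ht0, by rw [abs_of_pos ht0] at hdist; linarith⟩
    obtain ⟨hlow, hup⟩ := hbd t htδ
    rw [Real.dist_eq, abs_lt]
    have hQ1 : (0:ℝ) < 1 + b - ε := by linarith
    have hQ2 : (0:ℝ) < 1 + b + ε := by linarith
    constructor
    · -- -ε' < h t - 1/(1+b), use lower bound
      have key : 1/(1+b) - 1/(1+b+ε) < ε' := by
        rw [div_sub_div _ _ hL.ne' hQ2.ne', div_lt_iff₀ (by positivity)]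
        have e5 : (1+b+ε) - (1+b) = ε := by ring
        nlinarith [mul_pos hL hQ2, sq_nonneg (1+b)]
      linarith
    · have key : 1/(1+b-ε) - 1/(1+b) < ε' := by
        rw [div_sub_div _ _ hQ1.ne' hL.ne', div_lt_iff₀ (by positivity)]
        nlinarith [sq_nonneg (1+b)]
      linarith
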